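/- arXiv:2301.07220 — 2 statements merged into one kernel-verified Lean document; each statement's English description precedes it below -/
import Mathlib

section
/- Let ψ : ℝ^n \ {x₀} → ℝ (n ≥ 2) be given by ψ(x) = C₀ + C₁ ln |x − x₀|² for constants C₀, C₁ ∈ ℝ and x₀ ∈ ℝ^n. Then ψ satisfies the homogeneous cubic PDE ∂_kψ ∂_kψ ∂_{ij}ψ + ∂_kψ ∂_lψ ∂_{kl}ψ δ_{ij} = ∂_iψ ∂_{jk}ψ ∂_kψ + ∂_jψ ∂_{ik}ψ ∂_kψ on its domain. -/
open Real

/-- First partial derivative `∂ᵢ f` on `ℝⁿ`. -/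
noncomputable def pd {n : ℕ} (i : Fin n) (f : (Fin n → ℝ) → ℝ) (x : Fin n → ℝ) : ℝ :=
  fderiv ℝ f x (Pi.single i 1)

/-- Second partial derivative `∂ᵢ∂ⱼ f`. -/
noncomputable def pd2 {n : ℕ} (i j : Fin n) (f : (Fin n → ℝ) → ℝ) (x : Fin n → ℝ) : ℝ :=
  pd i (pd j f) x

namespace LogPDE

noncomputable def S {n : ℕ} (x₀ x : Fin n → ℝ) : ℝ := ∑ k, (x k - x₀ k) ^ 2

noncomputable def Ds {n : ℕ} (x₀ x : Fin n → ℝ) : (Fin n → ℝ) →L[ℝ] ℝ :=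
  ∑ k, (2 * (x k - x₀ k)) • (ContinuousLinearMap.proj k : (Fin n → ℝ) →L[ℝ] ℝ)

lemma S_pos {n : ℕ} {x₀ x : Fin n → ℝ} (hx : x ≠ x₀) : 0 < S x₀ x := by
  obtain ⟨k, hk⟩ := Function.ne_iff.mp hx
  have h : x k - x₀ k ≠ 0 := sub_ne_zero.mpr hk
  exact Finset.sum_pos' (fun k _ => sq_nonneg _) ⟨k, Finset.mem_univ k, by positivity⟩

lemma hasFDerivAt_S {n : ℕ} (x₀ x : Fin n → ℝ) : HasFDerivAt (S x₀) (Ds x₀ x) x := by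
  apply HasFDerivAt.fun_sum
  intro k _
  have h1 : HasDerivAt (fun t : ℝ => (t - x₀ k) ^ 2) (2 * (x k - x₀ k)) (x k) := by
    have := ((hasDerivAt_id (x k)).sub_const (x₀ k)).fun_pow 2
    simpa using this
  have h2 := h1.comp_hasFDerivAt (f := fun y : Fin n → ℝ => y k) x (hasFDerivAt_apply (𝕜 := ℝ) k x); exact h2

lemma Ds_apply {n : ℕ} (x₀ x : Fin n → ℝ) (i : Fin n) :
    Ds x₀ x (Pi.single i 1) = 2 * (x i - x₀ i) := by
  simp [Ds, ContinuousLinearMap.sum_apply, Pi.single_apply, Finset.sum_ite_eq']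

variable {n : ℕ} (x₀ : Fin n → ℝ) (C₀ C₁ : ℝ) (ψ : (Fin n → ℝ) → ℝ)

lemma pd_psi (hψ : ∀ x, x ≠ x₀ → ψ x = C₀ + C₁ * Real.log (∑ k, (x k - x₀ k) ^ 2))
    (x : Fin n → ℝ) (hx : x ≠ x₀) (i : Fin n) :
    pd i ψ x = 2 * C₁ * (x i - x₀ i) / S x₀ x := by
  have hS : S x₀ x ≠ 0 := (S_pos hx).ne'
  have heq : ψ =ᶠ[nhds x] fun y => C₀ + C₁ * Real.log (S x₀ y) := by
    filter_upwards [isOpen_ne.mem_nhds hx] with y hy using hψ y hy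
  have hg : HasFDerivAt (fun y => C₀ + C₁ * Real.log (S x₀ y))
      ((C₁ * (S x₀ x)⁻¹) • Ds x₀ x) x := by
    have h := ((Real.hasDerivAt_log hS).comp_hasFDerivAt x (hasFDerivAt_S x₀ x)).const_mul C₁
    simpa [smul_smul] using h.const_add C₀
  rw [pd, heq.fderiv_eq, hg.fderiv]
  simp only [ContinuousLinearMap.coe_smul', Pi.smul_apply, Ds_apply, smul_eq_mul]
  field_simp

lemma pd2_psi (hψ : ∀ x, x ≠ x₀ → ψ x = C₀ + C₁ * Real.log (∑ k, (x k - x₀ k) ^ 2))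
    (x : Fin n → ℝ) (hx : x ≠ x₀) (i j : Fin n) :
    pd2 i j ψ x = 2 * C₁ * (if i = j then (1:ℝ) else 0) / S x₀ x
      - 4 * C₁ * (x i - x₀ i) * (x j - x₀ j) / (S x₀ x) ^ 2 := by
  have hS : S x₀ x ≠ 0 := (S_pos hx).ne'
  have heq : pd j ψ =ᶠ[nhds x] fun y => (2 * C₁) * ((y j - x₀ j) * (S x₀ y)⁻¹) := by
    filter_upwards [isOpen_ne.mem_nhds hx] with y hy
    rw [pd_psi x₀ C₀ C₁ ψ hψ y hy j, div_eq_mul_inv, mul_assoc]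
  have hinv : HasFDerivAt (fun y => (S x₀ y)⁻¹) (-(S x₀ x ^ 2)⁻¹ • Ds x₀ x) x :=
    (hasDerivAt_inv hS).comp_hasFDerivAt x (hasFDerivAt_S x₀ x)
  have hproj : HasFDerivAt (fun y : Fin n → ℝ => y j - x₀ j)
      (ContinuousLinearMap.proj j : (Fin n → ℝ) →L[ℝ] ℝ) x := by exact (hasFDerivAt_apply j x).sub_const (x₀ j)
  have hq := (hproj.fun_mul hinv).const_mul (2 * C₁)
  rw [pd2, pd, heq.fderiv_eq, hq.fderiv]
  simp only [ContinuousLinearMap.coe_smul', Pi.smul_apply, ContinuousLinearMap.add_apply,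
    Ds_apply, smul_eq_mul, ContinuousLinearMap.proj_apply, Pi.single_apply]
  rcases eq_or_ne i j with rfl | h
  · simp only [if_pos rfl]
    field_simp
    ring
  · simp only [if_neg h, if_neg (Ne.symm h)]
    field_simp
    ring

end LogPDE

/-- The function `ψ(x) = C₀ + C₁ · ln ‖x − x₀‖²` satisfies, away from `x₀`, the homogeneous
cubic PDE `∂ₖψ∂ₖψ ∂ᵢⱼψ + ∂ₖψ∂ₗψ∂ₖₗψ δᵢⱼ = ∂ᵢψ ∂ⱼₖψ∂ₖψ + ∂ⱼψ ∂ᵢₖψ∂ₖψ`. -/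
theorem log_solves_cubic_pde {n : ℕ} (hn : 2 ≤ n) (C₀ C₁ : ℝ) (x₀ : Fin n → ℝ)
    (ψ : (Fin n → ℝ) → ℝ)
    (hψ : ∀ x, x ≠ x₀ → ψ x = C₀ + C₁ * Real.log (∑ k, (x k - x₀ k) ^ 2)) :
    ∀ x : Fin n → ℝ, x ≠ x₀ → ∀ i j : Fin n,
      (∑ k, pd k ψ x * pd k ψ x) * pd2 i j ψ x
        + (∑ k, ∑ l, pd k ψ x * pd l ψ x * pd2 k l ψ x) * (if i = j then (1:ℝ) else 0)
      = pd i ψ x * (∑ k, pd2 j k ψ x * pd k ψ x)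
        + pd j ψ x * (∑ k, pd2 i k ψ x * pd k ψ x) := by
  intro x hx i j
  have hS : LogPDE.S x₀ x ≠ 0 := (LogPDE.S_pos hx).ne'
  set A := LogPDE.S x₀ x with hA
  set a : Fin n → ℝ := fun k => x k - x₀ k with ha
  have hp : ∀ i, pd i ψ x = 2 * C₁ * a i / A :=
    fun i => LogPDE.pd_psi x₀ C₀ C₁ ψ hψ x hx i
  have hp2 : ∀ i j, pd2 i j ψ x
      = 2 * C₁ * (if i = j then (1:ℝ) else 0) / A - 4 * C₁ * a i * a j / A ^ 2 :=
    fun i j => LogPDE.pd2_psi x₀ C₀ C₁ ψ hψ x hx i j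
  have hsum : ∑ k, a k ^ 2 = A := rfl
  have h1 : ∑ k, pd k ψ x * pd k ψ x = 4 * C₁ ^ 2 / A := by
    simp_rw [hp]
    have h : ∀ k ∈ Finset.univ, 2 * C₁ * a k / A * (2 * C₁ * a k / A)
        = 4 * C₁ ^ 2 / A ^ 2 * a k ^ 2 := by
      intro k _; field_simp; ring
    rw [Finset.sum_congr rfl h, ← Finset.mul_sum, hsum]
    field_simp
  have h2 : ∀ m : Fin n, ∑ k, pd2 m k ψ x * pd k ψ x = -(4 * C₁ ^ 2 * a m) / A ^ 2 := by
    intro m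
    simp_rw [hp, hp2]
    have h : ∀ k ∈ Finset.univ,
        (2 * C₁ * (if m = k then (1:ℝ) else 0) / A - 4 * C₁ * a m * a k / A ^ 2)
          * (2 * C₁ * a k / A)
        = (if m = k then 4 * C₁ ^ 2 * a k / A ^ 2 else 0) - 8 * C₁ ^ 2 * a m / A ^ 3 * a k ^ 2 := by
      intro k _
      rcases eq_or_ne m k with rfl | h
      · simp only [if_pos rfl, eq_self_iff_true, if_true]; field_simp; ring
      · simp only [if_neg h]; field_simp; ring
    rw [Finset.sum_congr rfl h, Finset.sum_sub_distrib, Finset.sum_ite_eq, ← Finset.mul_sum, hsum]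
    simp only [Finset.mem_univ, if_pos]
    field_simp; ring
  have h3 : ∑ k, ∑ l, pd k ψ x * pd l ψ x * pd2 k l ψ x = -(8 * C₁ ^ 3) / A ^ 2 := by
    have step : ∀ k ∈ Finset.univ, ∑ l, pd k ψ x * pd l ψ x * pd2 k l ψ x
        = pd k ψ x * (-(4 * C₁ ^ 2 * a k) / A ^ 2) := by
      intro k _
      rw [← h2 k, Finset.mul_sum]
      exact Finset.sum_congr rfl (fun l _ => by ring)
    rw [Finset.sum_congr rfl step]
    simp_rw [hp]
    have h : ∀ k ∈ Finset.univ, 2 * C₁ * a k / A * (-(4 * C₁ ^ 2 * a k) / A ^ 2)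
        = -(8 * C₁ ^ 3 / A ^ 3) * a k ^ 2 := by
      intro k _; field_simp; ring
    rw [Finset.sum_congr rfl h, ← Finset.mul_sum, hsum]
    field_simp
  rw [h1, h3, hp2, hp i, hp j, h2 i, h2 j]
  rcases eq_or_ne i j with rfl | h
  · simp only [if_pos rfl]; field_simp; ring
  · simp only [if_neg h]; field_simp; ring
end

section
/- Let ψ : ℝ^n \ {x₀} → ℝ (n ≥ 2) be given by ψ(x) = C₀ + ⟨x − x₀, ν⟩ / |x − x₀|² for constants C₀ ∈ ℝ, ν, x₀ ∈ ℝ^n. Then ψ satisfies the PDE ∂_kψ ∂_kψ ∂_{ij}ψ + ∂_kψ ∂_lψ ∂_{kl}ψ δ_{ij} = ∂_iψ ∂_{jk}ψ ∂_kψ + ∂_jψ ∂_{ik}ψ ∂_kψ on its domain. -/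
open Real

section aux

private lemma myDiv {E : Type*} [NormedAddCommGroup E] [NormedSpace ℝ E] {c d : E → ℝ}
    {c' d' : E →L[ℝ] ℝ} {x : E}
    (hc : HasFDerivAt c c' x) (hd : HasFDerivAt d d' x) (hx : d x ≠ 0) :
    HasFDerivAt (fun y => c y / d y) ((d x)⁻¹ • c' + (-(c x) * ((d x) ^ 2)⁻¹) • d') x := by
  have h1 : HasDerivAt Inv.inv (-((d x)^2)⁻¹) (d x) := hasDerivAt_inv hx
  have h2 : HasFDerivAt (fun y => (d y)⁻¹) ((-((d x)^2)⁻¹) • d') x := h1.comp_hasFDerivAt x hd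
  have h3 := hc.fun_mul h2
  have hfun : (fun y => c y / d y) = fun y => c y * (d y)⁻¹ := by ext y; rw [div_eq_mul_inv]
  rw [hfun]; refine h3.congr_fderiv ?_; ext v; simp; ring

variable {n : ℕ} (ν x₀ : Fin n → ℝ)

private noncomputable def Sf (x : Fin n → ℝ) : ℝ := ∑ k, (x k - x₀ k) ^ 2
private noncomputable def Nf (x : Fin n → ℝ) : ℝ := ∑ k, (x k - x₀ k) * ν k

private noncomputable def Sd (x : Fin n → ℝ) : (Fin n → ℝ) →L[ℝ] ℝ :=
  ∑ k, (2 * (x k - x₀ k)) • (ContinuousLinearMap.proj k : (Fin n → ℝ) →L[ℝ] ℝ)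
private noncomputable def Nd : (Fin n → ℝ) →L[ℝ] ℝ :=
  ∑ k, (ν k) • (ContinuousLinearMap.proj k : (Fin n → ℝ) →L[ℝ] ℝ)

private lemma hasS (x : Fin n → ℝ) : HasFDerivAt (Sf x₀) (Sd x₀ x) x := by
  have : ∀ k : Fin n, HasFDerivAt (fun y : Fin n → ℝ => (y k - x₀ k) ^ 2)
      ((2 * (x k - x₀ k)) • (ContinuousLinearMap.proj k : (Fin n → ℝ) →L[ℝ] ℝ)) x := by
    intro k
    have h := ((ContinuousLinearMap.proj k : (Fin n → ℝ) →L[ℝ] ℝ).hasFDerivAt (x := x)).sub_const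
      (x₀ k)
    have h2 := h.fun_mul h
    have hfun : (fun y : Fin n → ℝ => (y k - x₀ k) ^ 2)
        = fun y : Fin n → ℝ => ((ContinuousLinearMap.proj k : (Fin n → ℝ) →L[ℝ] ℝ) y - x₀ k)
          * ((ContinuousLinearMap.proj k : (Fin n → ℝ) →L[ℝ] ℝ) y - x₀ k) := by
      ext y; simp [sq]
    rw [hfun]
    refine h2.congr_fderiv ?_
    ext v; simp; ring
  exact HasFDerivAt.fun_sum (fun k _ => this k)

private lemma hasN (x : Fin n → ℝ) : HasFDerivAt (Nf ν x₀) (Nd ν) x := by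
  have : ∀ k : Fin n, HasFDerivAt (fun y : Fin n → ℝ => (y k - x₀ k) * ν k)
      ((ν k) • (ContinuousLinearMap.proj k : (Fin n → ℝ) →L[ℝ] ℝ)) x := by
    intro k
    have h := (((ContinuousLinearMap.proj k : (Fin n → ℝ) →L[ℝ] ℝ).hasFDerivAt (x := x)).sub_const
      (x₀ k)).mul_const (ν k)
    simpa [smul_smul, mul_comm] using h
  exact HasFDerivAt.fun_sum (fun k _ => this k)

private lemma Sd_apply (x : Fin n → ℝ) (i : Fin n) :
    Sd x₀ x (Pi.single i 1) = 2 * (x i - x₀ i) := by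
  simp [Sd, ContinuousLinearMap.sum_apply, Pi.single_apply, Finset.sum_ite_eq']

private lemma Nd_apply (i : Fin n) : Nd ν (Pi.single i 1) = ν i := by
  simp [Nd, ContinuousLinearMap.sum_apply, Pi.single_apply, Finset.sum_ite_eq']

private lemma Sf_pos {x : Fin n → ℝ} (hx : x ≠ x₀) : 0 < Sf x₀ x := by
  have : ∃ k, x k ≠ x₀ k := by
    by_contra h
    push_neg at h
    exact hx (funext h)
  obtain ⟨k, hk⟩ := this
  refine Finset.sum_pos' (fun m _ => sq_nonneg _) ⟨k, Finset.mem_univ k, ?_⟩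
  have hne : x k - x₀ k ≠ 0 := sub_ne_zero.mpr hk
  positivity


private lemma pdA (C₀ : ℝ) (ψ : (Fin n → ℝ) → ℝ)
    (hψ : ∀ x, x ≠ x₀ → ψ x = C₀ + (∑ k, (x k - x₀ k) * ν k) / (∑ k, (x k - x₀ k) ^ 2)) :
    ∀ x, x ≠ x₀ → ∀ i, pd i ψ x =
      (ν i * Sf x₀ x - 2 * Nf ν x₀ x * (x i - x₀ i)) / (Sf x₀ x) ^ 2 := by
  intro x hx i
  have hS0 : Sf x₀ x ≠ 0 := (Sf_pos x₀ hx).ne'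
  have hg : HasFDerivAt (fun y => C₀ + Nf ν x₀ y / Sf x₀ y)
      ((Sf x₀ x)⁻¹ • Nd ν + (-(Nf ν x₀ x) * ((Sf x₀ x) ^ 2)⁻¹) • Sd x₀ x) x :=
    (myDiv (hasN ν x₀ x) (hasS x₀ x) hS0).const_add C₀
  have heq : ψ =ᶠ[nhds x] fun y => C₀ + Nf ν x₀ y / Sf x₀ y := by
    filter_upwards [isOpen_compl_singleton.mem_nhds hx] with y hy
    exact hψ y hy
  rw [pd, heq.fderiv_eq, hg.fderiv]
  simp [ContinuousLinearMap.add_apply, ContinuousLinearMap.smul_apply, Sd_apply, Nd_apply]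
  field_simp
  ring


private lemma pdB (C₀ : ℝ) (ψ : (Fin n → ℝ) → ℝ)
    (hψ : ∀ x, x ≠ x₀ → ψ x = C₀ + (∑ k, (x k - x₀ k) * ν k) / (∑ k, (x k - x₀ k) ^ 2)) :
    ∀ x, x ≠ x₀ → ∀ i j : Fin n, pd2 i j ψ x =
      (-2 * ν i * (x j - x₀ j) * Sf x₀ x - 2 * ν j * (x i - x₀ i) * Sf x₀ x
        - 2 * Nf ν x₀ x * Sf x₀ x * (if i = j then (1:ℝ) else 0)
        + 8 * Nf ν x₀ x * (x i - x₀ i) * (x j - x₀ j)) / (Sf x₀ x) ^ 3 := by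
  intro x hx i j
  have hS0 : Sf x₀ x ≠ 0 := (Sf_pos x₀ hx).ne'
  have hasU : HasFDerivAt (fun y => 2 * Nf ν x₀ y) ((2:ℝ) • Nd ν) x :=
    (hasN ν x₀ x).const_mul 2
  have hasV : HasFDerivAt (fun y : Fin n → ℝ => y j - x₀ j)
      (ContinuousLinearMap.proj j : (Fin n → ℝ) →L[ℝ] ℝ) x :=
    ((ContinuousLinearMap.proj j : (Fin n → ℝ) →L[ℝ] ℝ).hasFDerivAt (x := x)).sub_const (x₀ j)
  have hasUV := hasU.mul hasV
  have hasNum : HasFDerivAt (fun y => ν j * Sf x₀ y - 2 * Nf ν x₀ y * (y j - x₀ j))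
      ((ν j) • Sd x₀ x - ((2 * Nf ν x₀ x) • (ContinuousLinearMap.proj j : (Fin n → ℝ) →L[ℝ] ℝ)
        + (x j - x₀ j) • ((2:ℝ) • Nd ν))) x :=
    ((hasS x₀ x).const_mul (ν j)).sub hasUV
  have hasDen : HasFDerivAt (fun y => (Sf x₀ y) ^ 2) ((2 * Sf x₀ x) • Sd x₀ x) x := by
    have h2 := (hasS x₀ x).fun_mul (hasS x₀ x)
    have hfun : (fun y => (Sf x₀ y) ^ 2) = fun y => Sf x₀ y * Sf x₀ y := by ext y; ring
    rw [hfun]; refine h2.congr_fderiv ?_; ext v; simp; ring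
  have hDen0 : (Sf x₀ x) ^ 2 ≠ 0 := pow_ne_zero 2 hS0
  have hquot := myDiv hasNum hasDen hDen0
  have heq : (fun y => pd j ψ y) =ᶠ[nhds x]
      (fun y => (ν j * Sf x₀ y - 2 * Nf ν x₀ y * (y j - x₀ j)) / (Sf x₀ y) ^ 2) := by
    filter_upwards [isOpen_compl_singleton.mem_nhds hx] with y hy
    exact pdA ν x₀ C₀ ψ hψ y hy j
  rw [pd2, pd, heq.fderiv_eq, hquot.fderiv]
  simp only [ContinuousLinearMap.add_apply, ContinuousLinearMap.smul_apply,
    ContinuousLinearMap.sub_apply, ContinuousLinearMap.coe_smul', Pi.smul_apply,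
    ContinuousLinearMap.proj_apply, Sd_apply, Nd_apply, smul_eq_mul, Pi.single_apply]
  rcases eq_or_ne i j with rfl | hij
  · simp only [if_pos rfl]
    field_simp
    ring
  · simp only [if_neg hij, if_neg (Ne.symm hij)]
    field_simp
    ring


private lemma sum_eval (x : Fin n → ℝ) (a b c d e : ℝ) (j : Fin n) :
    ∑ k, (a * ν k ^ 2 + b * ((x k - x₀ k) * ν k) + c * (x k - x₀ k) ^ 2
      + (if j = k then (1:ℝ) else 0) * (d * ν k + e * (x k - x₀ k)))
    = a * (∑ k, ν k ^ 2) + b * Nf ν x₀ x + c * Sf x₀ x + d * ν j + e * (x j - x₀ j) := by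
  rw [Finset.sum_add_distrib, Finset.sum_add_distrib, Finset.sum_add_distrib,
    ← Finset.mul_sum, ← Finset.mul_sum, ← Finset.mul_sum]
  simp only [ite_mul, one_mul, zero_mul, Finset.sum_ite_eq, Finset.mem_univ, if_true]
  rw [Nf, Sf]
  ring

end aux

/-- The function `ψ(x) = C₀ + ⟨x − x₀, ν⟩ / ‖x − x₀‖²` satisfies, away from `x₀`, the
homogeneous cubic PDE `∂ₖψ∂ₖψ ∂ᵢⱼψ + ∂ₖψ∂ₗψ∂ₖₗψ δᵢⱼ = ∂ᵢψ ∂ⱼₖψ∂ₖψ + ∂ⱼψ ∂ᵢₖψ∂ₖψ`. -/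
theorem inversion_solves_cubic_pde {n : ℕ} (hn : 2 ≤ n) (C₀ : ℝ) (ν x₀ : Fin n → ℝ)
    (ψ : (Fin n → ℝ) → ℝ)
    (hψ : ∀ x, x ≠ x₀ →
      ψ x = C₀ + (∑ k, (x k - x₀ k) * ν k) / (∑ k, (x k - x₀ k) ^ 2)) :
    ∀ x : Fin n → ℝ, x ≠ x₀ → ∀ i j : Fin n,
      (∑ k, pd k ψ x * pd k ψ x) * pd2 i j ψ x
        + (∑ k, ∑ l, pd k ψ x * pd l ψ x * pd2 k l ψ x) * (if i = j then (1:ℝ) else 0)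
      = pd i ψ x * (∑ k, pd2 j k ψ x * pd k ψ x)
        + pd j ψ x * (∑ k, pd2 i k ψ x * pd k ψ x) := by
  intro x hx i j
  have hS0 : Sf x₀ x ≠ 0 := (Sf_pos x₀ hx).ne'
  have hA := pdA ν x₀ C₀ ψ hψ x hx
  have hB := pdB ν x₀ C₀ ψ hψ x hx
  simp only [hA, hB]
  have e1 : (∑ k, (ν k * Sf x₀ x - 2 * Nf ν x₀ x * (x k - x₀ k)) / Sf x₀ x ^ 2 *
      ((ν k * Sf x₀ x - 2 * Nf ν x₀ x * (x k - x₀ k)) / Sf x₀ x ^ 2))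
      = (∑ k, ν k ^ 2) / Sf x₀ x ^ 2 := by
    have hterm : ∀ k : Fin n, (ν k * Sf x₀ x - 2 * Nf ν x₀ x * (x k - x₀ k)) / Sf x₀ x ^ 2 *
        ((ν k * Sf x₀ x - 2 * Nf ν x₀ x * (x k - x₀ k)) / Sf x₀ x ^ 2)
        = (Sf x₀ x ^ 2 * ν k ^ 2
          + (-(4 * Sf x₀ x * Nf ν x₀ x)) * ((x k - x₀ k) * ν k)
          + (4 * Nf ν x₀ x ^ 2) * (x k - x₀ k) ^ 2
          + (if i = k then (1:ℝ) else 0) * (0 * ν k + 0 * (x k - x₀ k))) / Sf x₀ x ^ 4 := by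
      intro k; field_simp; ring
    simp only [hterm, ← Finset.sum_div, sum_eval]
    field_simp
    ring
  have e2 : ∀ m : Fin n, (∑ k, (-2 * ν m * (x k - x₀ k) * Sf x₀ x
        - 2 * ν k * (x m - x₀ m) * Sf x₀ x
        - 2 * Nf ν x₀ x * Sf x₀ x * (if m = k then (1:ℝ) else 0)
        + 8 * Nf ν x₀ x * (x m - x₀ m) * (x k - x₀ k)) / Sf x₀ x ^ 3 *
        ((ν k * Sf x₀ x - 2 * Nf ν x₀ x * (x k - x₀ k)) / Sf x₀ x ^ 2))
      = -2 * (∑ k, ν k ^ 2) * (x m - x₀ m) / Sf x₀ x ^ 3 := by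
    intro m
    have hterm : ∀ k : Fin n, (-2 * ν m * (x k - x₀ k) * Sf x₀ x
        - 2 * ν k * (x m - x₀ m) * Sf x₀ x
        - 2 * Nf ν x₀ x * Sf x₀ x * (if m = k then (1:ℝ) else 0)
        + 8 * Nf ν x₀ x * (x m - x₀ m) * (x k - x₀ k)) / Sf x₀ x ^ 3 *
        ((ν k * Sf x₀ x - 2 * Nf ν x₀ x * (x k - x₀ k)) / Sf x₀ x ^ 2)
        = ((-2 * (x m - x₀ m) * Sf x₀ x ^ 2) * ν k ^ 2
          + (-2 * ν m * Sf x₀ x ^ 2 + 12 * Nf ν x₀ x * Sf x₀ x * (x m - x₀ m)) * ((x k - x₀ k) * ν k)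
          + (4 * ν m * Nf ν x₀ x * Sf x₀ x - 16 * Nf ν x₀ x ^ 2 * (x m - x₀ m)) * (x k - x₀ k) ^ 2
          + (if m = k then (1:ℝ) else 0) * ((-2 * Nf ν x₀ x * Sf x₀ x ^ 2) * ν k
            + (4 * Nf ν x₀ x ^ 2 * Sf x₀ x) * (x k - x₀ k))) / Sf x₀ x ^ 5 := by
      intro k
      rcases eq_or_ne m k with h | h
      · simp only [if_pos h]; field_simp; ring
      · simp only [if_neg h]; field_simp; ring
    simp only [hterm, ← Finset.sum_div, sum_eval]
    field_simp
    ring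
  have e3 : (∑ k, ∑ l, (ν k * Sf x₀ x - 2 * Nf ν x₀ x * (x k - x₀ k)) / Sf x₀ x ^ 2 *
        ((ν l * Sf x₀ x - 2 * Nf ν x₀ x * (x l - x₀ l)) / Sf x₀ x ^ 2) *
        ((-2 * ν k * (x l - x₀ l) * Sf x₀ x - 2 * ν l * (x k - x₀ k) * Sf x₀ x
          - 2 * Nf ν x₀ x * Sf x₀ x * (if k = l then (1:ℝ) else 0)
          + 8 * Nf ν x₀ x * (x k - x₀ k) * (x l - x₀ l)) / Sf x₀ x ^ 3))
      = 2 * (∑ k, ν k ^ 2) * Nf ν x₀ x / Sf x₀ x ^ 4 := by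
    have hinner : ∀ k : Fin n, (∑ l, (ν k * Sf x₀ x - 2 * Nf ν x₀ x * (x k - x₀ k)) / Sf x₀ x ^ 2 *
        ((ν l * Sf x₀ x - 2 * Nf ν x₀ x * (x l - x₀ l)) / Sf x₀ x ^ 2) *
        ((-2 * ν k * (x l - x₀ l) * Sf x₀ x - 2 * ν l * (x k - x₀ k) * Sf x₀ x
          - 2 * Nf ν x₀ x * Sf x₀ x * (if k = l then (1:ℝ) else 0)
          + 8 * Nf ν x₀ x * (x k - x₀ k) * (x l - x₀ l)) / Sf x₀ x ^ 3))
        = (ν k * Sf x₀ x - 2 * Nf ν x₀ x * (x k - x₀ k)) / Sf x₀ x ^ 2 *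
          (-2 * (∑ k', ν k' ^ 2) * (x k - x₀ k) / Sf x₀ x ^ 3) := by
      intro k
      have hcomm : ∀ l : Fin n, (ν k * Sf x₀ x - 2 * Nf ν x₀ x * (x k - x₀ k)) / Sf x₀ x ^ 2 *
          ((ν l * Sf x₀ x - 2 * Nf ν x₀ x * (x l - x₀ l)) / Sf x₀ x ^ 2) *
          ((-2 * ν k * (x l - x₀ l) * Sf x₀ x - 2 * ν l * (x k - x₀ k) * Sf x₀ x
            - 2 * Nf ν x₀ x * Sf x₀ x * (if k = l then (1:ℝ) else 0)
            + 8 * Nf ν x₀ x * (x k - x₀ k) * (x l - x₀ l)) / Sf x₀ x ^ 3)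
          = (ν k * Sf x₀ x - 2 * Nf ν x₀ x * (x k - x₀ k)) / Sf x₀ x ^ 2 *
            ((-2 * ν k * (x l - x₀ l) * Sf x₀ x - 2 * ν l * (x k - x₀ k) * Sf x₀ x
              - 2 * Nf ν x₀ x * Sf x₀ x * (if k = l then (1:ℝ) else 0)
              + 8 * Nf ν x₀ x * (x k - x₀ k) * (x l - x₀ l)) / Sf x₀ x ^ 3 *
              ((ν l * Sf x₀ x - 2 * Nf ν x₀ x * (x l - x₀ l)) / Sf x₀ x ^ 2)) := by
        intro l; ring
      simp only [hcomm, ← Finset.mul_sum]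
      rw [e2 k]
    simp only [hinner]
    have hterm2 : ∀ k : Fin n, (ν k * Sf x₀ x - 2 * Nf ν x₀ x * (x k - x₀ k)) / Sf x₀ x ^ 2 *
        (-2 * (∑ k', ν k' ^ 2) * (x k - x₀ k) / Sf x₀ x ^ 3)
        = ((0:ℝ) * ν k ^ 2
          + (-2 * (∑ k', ν k' ^ 2) * Sf x₀ x) * ((x k - x₀ k) * ν k)
          + (4 * (∑ k', ν k' ^ 2) * Nf ν x₀ x) * (x k - x₀ k) ^ 2
          + (if i = k then (1:ℝ) else 0) * (0 * ν k + 0 * (x k - x₀ k))) / Sf x₀ x ^ 5 := by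
      intro k; field_simp; ring
    simp only [hterm2, ← Finset.sum_div, sum_eval]
    field_simp
    ring
  rw [e1, e2 i, e2 j, e3]
  rcases eq_or_ne i j with rfl | hij
  · simp only [if_pos rfl]
    field_simp
    ring
  · simp only [if_neg hij]
    field_simp
    ring
end
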